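/- Existence of local slices for G_m-actions: Let Φ: R → R[t^{±1}] be a nontrivial coaction of the multiplicative group G_m on a commutative K-algebra R. Then there exists a nonzero semi-invariant c ∈ R and an element s ∈ R_c such that s is a local slice: s is an invertible semi-invariant of weight t^{−d} for some d > 0, and every a ∈ R_c of degree < d lies in (R_c)^{G_m}. -/

import Mathlib

open LaurentPolynomial

/-- A (co)action of the multiplicative group `G_m` on `Spec R`, given by a ring
homomorphism `Φ : R → R[t,t⁻¹]`: substituting `t = 1` is the identity, and applying `Φ`
coefficientwise to `Φ a` equals substituting `t ↦ s·t` in `Φ a`. -/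
def IsGmCoaction {R : Type*} [CommRing R] (Φ : R →+* LaurentPolynomial R) : Prop :=
  (∀ a : R, (Φ a).coeff.sum (fun _ r => r) = a) ∧
  (∀ a : R, Finsupp.mapRange ⇑Φ (map_zero Φ) (Φ a).coeff =
    (Φ a).coeff.sum fun k r => Finsupp.single k (LaurentPolynomial.C r * LaurentPolynomial.T k))

namespace Stmt12Aux

open LaurentPolynomial

variable {K R : Type*} [CommRing K] [CommRing R] [Algebra K R]
variable (Φ : R →ₐ[K] LaurentPolynomial R)

/-- component form of coassociativity -/
theorem coassoc (hΦ : IsGmCoaction Φ.toRingHom) (a : R) (k : ℤ) :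
    Φ ((Φ a).coeff k) = C ((Φ a).coeff k) * T k := by
  have h := congrFun (congrArg (DFunLike.coe) (hΦ.2 a)) k
  rw [Finsupp.mapRange_apply] at h
  simp only [AlgHom.toRingHom_eq_coe, RingHom.coe_coe] at h
  rw [h, Finsupp.sum_apply]
  classical
  have : ((Φ a).coeff.sum fun j r => (Finsupp.single j (C r * T j)) k)
      = (Φ a).coeff.sum fun j r => if j = k then C r * T j else 0 :=
    Finsupp.sum_congr (fun j _ => by rw [Finsupp.single_apply])
  rw [this, Finsupp.sum_ite_eq']
  split
  · rfl
  · next hmem => rw [Finsupp.notMem_support_iff.mp hmem, map_zero, zero_mul]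

/-- weights of semi-invariants dividing a power of `c` -/
def Wset (c : R) : Set ℤ :=
  {k | ∃ r s : R, ∃ n : ℕ, Φ r = C r * T k ∧ r * s = c ^ n}

theorem Wset.zero_mem (c : R) : (0 : ℤ) ∈ Wset Φ c :=
  ⟨1, 1, 0, by rw [map_one, map_one, T_zero, mul_one], by rw [mul_one, pow_zero]⟩

theorem si_mul {r₁ r₂ : R} {k₁ k₂ : ℤ} (h1 : Φ r₁ = C r₁ * T k₁)
    (h2 : Φ r₂ = C r₂ * T k₂) : Φ (r₁ * r₂) = C (r₁ * r₂) * T (k₁ + k₂) := by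
  rw [map_mul, h1, h2, map_mul, T_add]; ring

theorem Wset.add_mem {c : R} {k₁ k₂ : ℤ} (h1 : k₁ ∈ Wset Φ c) (h2 : k₂ ∈ Wset Φ c) :
    k₁ + k₂ ∈ Wset Φ c := by
  obtain ⟨r₁, s₁, n₁, hr₁, he₁⟩ := h1
  obtain ⟨r₂, s₂, n₂, hr₂, he₂⟩ := h2
  exact ⟨r₁ * r₂, s₁ * s₂, n₁ + n₂, si_mul Φ hr₁ hr₂, by
    rw [pow_add, ← he₁, ← he₂]; ring⟩

theorem Wset.nsmul_mem {c : R} {k : ℤ} (h : k ∈ Wset Φ c) (e : ℕ) :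
    (e : ℤ) * k ∈ Wset Φ c := by
  induction e with
  | zero => simpa using Wset.zero_mem Φ c
  | succ m ih =>
      have := Wset.add_mem Φ ih h
      convert this using 1
      push_cast; ring

theorem Wset.mono {c r' : R} : Wset Φ c ⊆ Wset Φ (c * r') := by
  rintro k ⟨r, s, n, hr, he⟩
  exact ⟨r, s * r' ^ n, n, hr, by rw [mul_pow, ← he]; ring⟩

/-- the subgroup of weights of semi-invariant units of `R_c` -/
def Gsub (c : R) : AddSubgroup ℤ where
  carrier := {g | ∃ a b : ℤ, a ∈ Wset Φ c ∧ b ∈ Wset Φ c ∧ g = a - b}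
  zero_mem' := ⟨0, 0, Wset.zero_mem Φ c, Wset.zero_mem Φ c, by ring⟩
  add_mem' := by
    rintro x y ⟨a, b, ha, hb, rfl⟩ ⟨a', b', ha', hb', rfl⟩
    exact ⟨a + a', b + b', Wset.add_mem Φ ha ha', Wset.add_mem Φ hb hb', by ring⟩
  neg_mem' := by
    rintro x ⟨a, b, ha, hb, rfl⟩
    exact ⟨b, a, hb, ha, by ring⟩

theorem Gsub.of_Wset {c : R} {k : ℤ} (h : k ∈ Wset Φ c) : k ∈ Gsub Φ c :=
  ⟨k, 0, h, Wset.zero_mem Φ c, by ring⟩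

theorem Gsub.mono {c r' : R} {k : ℤ} (h : k ∈ Gsub Φ c) : k ∈ Gsub Φ (c * r') := by
  obtain ⟨a, b, ha, hb, rfl⟩ := h
  exact ⟨a, b, Wset.mono Φ ha, Wset.mono Φ hb, rfl⟩

end Stmt12Aux

namespace Stmt12Aux

/-- evaluation at `t = 1` -/
noncomputable def eps (S : Type*) [CommRing S] : LaurentPolynomial S →+* S :=
  AddMonoidAlgebra.liftNCRingHom (RingHom.id S) 1 (fun _ _ => Commute.all _ _)

theorem eps_single {S : Type*} [CommRing S] (k : ℤ) (x : S) :
    eps S (AddMonoidAlgebra.single k x) = x := by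
  show AddMonoidAlgebra.liftNC _ _ (AddMonoidAlgebra.single k x) = x
  rw [AddMonoidAlgebra.liftNC_single]
  simp

theorem eps_eq_sum {S : Type*} [CommRing S] (p : LaurentPolynomial S) :
    eps S p = p.coeff.sum fun _ x => x := by
  induction p using AddMonoidAlgebra.induction with
  | zero => simp
  | single_add k x p hk hx ih =>
      rw [map_add, ih, eps_single, AddMonoidAlgebra.coeff_add,
        Finsupp.sum_add_index (by simp) (by intros; rfl),
        AddMonoidAlgebra.coeff_single, Finsupp.sum_single_index rfl]

end Stmt12Aux

namespace Stmt12Aux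

open LaurentPolynomial

section Loc

variable {K R : Type*} [CommRing K] [CommRing R] [Algebra K R]
variable {Φ : R →ₐ[K] LaurentPolynomial R} {c : R}
variable {Φc : Localization.Away c →+* LaurentPolynomial (Localization.Away c)}

theorem inv_si {x y : Localization.Away c} {m : ℤ} (hxy : x * y = 1)
    (hx : Φc x = C x * T m) : Φc y = C y * T (-m) := by
  have h1 : Φc x * Φc y = 1 := by rw [← map_mul, hxy, map_one]
  have h2 : Φc x * (C y * T (-m)) = 1 := by
    rw [hx, mul_mul_mul_comm, ← map_mul, hxy, map_one, one_mul, ← T_add,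
      add_neg_cancel, T_zero]
  calc Φc y = Φc y * (Φc x * (C y * T (-m))) := by rw [h2, mul_one]
    _ = (Φc x * Φc y) * (C y * T (-m)) := by ring
    _ = C y * T (-m) := by rw [h1, one_mul]

theorem map_si
    (hΦc : ∀ r : R, (Φc (algebraMap R (Localization.Away c) r)).coeff =
      Finsupp.mapRange (algebraMap R (Localization.Away c))
        (map_zero (algebraMap R (Localization.Away c))) (Φ r).coeff)
    {r : R} {m : ℤ} (hm : Φ r = C r * T m) :
    Φc (algebraMap R (Localization.Away c) r) =
      C (algebraMap R (Localization.Away c) r) * T m := by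
  rw [← AddMonoidAlgebra.coeff_inj, hΦc r, hm, ← single_eq_C_mul_T, ← single_eq_C_mul_T,
    AddMonoidAlgebra.coeff_single, AddMonoidAlgebra.coeff_single, Finsupp.mapRange_single]

theorem counit_loc (hΦ : IsGmCoaction Φ.toRingHom)
    (hΦc : ∀ r : R, (Φc (algebraMap R (Localization.Away c) r)).coeff =
      Finsupp.mapRange (algebraMap R (Localization.Away c))
        (map_zero (algebraMap R (Localization.Away c))) (Φ r).coeff)
    (x : Localization.Away c) : eps _ (Φc x) = x := by
  have h : (eps (Localization.Away c)).comp Φc = RingHom.id _ := by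
    apply IsLocalization.ringHom_ext (Submonoid.powers c)
    ext r
    simp only [RingHom.coe_comp, Function.comp_apply, RingHom.id_apply]
    rw [eps_eq_sum, hΦc r, Finsupp.sum_mapRange_index (fun _ => rfl), ← map_finsuppSum]
    have h1 := hΦ.1 r
    simp only [AlgHom.toRingHom_eq_coe, RingHom.coe_coe] at h1
    rw [h1]
  exact RingHom.congr_fun h x

theorem repr {v : Localization.Away c}
    (hv : algebraMap R (Localization.Away c) c * v = 1) (x : Localization.Away c) :
    ∃ (r : R) (e : ℕ), x = algebraMap R (Localization.Away c) r * v ^ e := by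
  obtain ⟨⟨r, s⟩, hx⟩ := IsLocalization.surj (Submonoid.powers c) x
  obtain ⟨e, he⟩ := s.2
  refine ⟨r, e, ?_⟩
  have h1 : x * algebraMap R (Localization.Away c) (c ^ e) =
      algebraMap R (Localization.Away c) r := by
    have he' : c ^ e = (s : R) := he
    rw [he']; exact hx
  calc x = x * (algebraMap R (Localization.Away c) c * v) ^ e := by
        rw [hv, one_pow, mul_one]
    _ = x * algebraMap R (Localization.Away c) (c ^ e) * v ^ e := by
        rw [mul_pow, map_pow]; ring
    _ = algebraMap R (Localization.Away c) r * v ^ e := by rw [h1]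

theorem mul_CT_apply {S : Type*} [CommRing S] (p : LaurentPolynomial S) (u : S) (m j : ℤ) :
    (p * (C u * T m) : LaurentPolynomial S).coeff j = p.coeff (j - m) * u := by
  rw [← single_eq_C_mul_T]
  exact AddMonoidAlgebra.coeff_mul_single_apply p u m j

theorem component (hΦ : IsGmCoaction Φ.toRingHom) {w : ℤ} (hcw : Φ c = C c * T w)
    (hΦc : ∀ r : R, (Φc (algebraMap R (Localization.Away c) r)).coeff =
      Finsupp.mapRange (algebraMap R (Localization.Away c))
        (map_zero (algebraMap R (Localization.Away c))) (Φ r).coeff)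
    {v : Localization.Away c} (hv : algebraMap R (Localization.Away c) c * v = 1)
    (x : Localization.Away c) (k : ℤ) :
    ∃ (r' : R) (e : ℕ), Φ r' = C r' * T (k + e * w) ∧
      (Φc x).coeff k = algebraMap R (Localization.Away c) r' * v ^ e := by
  obtain ⟨r, e, rfl⟩ := repr hv x
  have hvsi : Φc v = C v * T (-w) := inv_si hv (map_si hΦc hcw)
  have hx : Φc (algebraMap R (Localization.Away c) r * v ^ e) =
      Φc (algebraMap R (Localization.Away c) r) * (C (v ^ e) * T (-((e : ℤ) * w))) := by
    rw [map_mul, map_pow, hvsi, mul_pow, ← map_pow (C : Localization.Away c →+* _) v e,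
      T_pow, mul_neg]
  refine ⟨(Φ r).coeff (k + e * w), e, coassoc Φ hΦ r (k + e * w), ?_⟩
  rw [hx, mul_CT_apply, hΦc r, Finsupp.mapRange_apply, sub_neg_eq_add]

theorem component_si (hΦ : IsGmCoaction Φ.toRingHom) {w : ℤ} (hcw : Φ c = C c * T w)
    (hΦc : ∀ r : R, (Φc (algebraMap R (Localization.Away c) r)).coeff =
      Finsupp.mapRange (algebraMap R (Localization.Away c))
        (map_zero (algebraMap R (Localization.Away c))) (Φ r).coeff)
    {v : Localization.Away c} (hv : algebraMap R (Localization.Away c) c * v = 1)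
    (x : Localization.Away c) (k : ℤ) :
    Φc ((Φc x).coeff k) = C ((Φc x).coeff k) * T k := by
  obtain ⟨r', e, hsi, hk⟩ := component hΦ hcw hΦc hv x k
  have hvsi : Φc v = C v * T (-w) := inv_si hv (map_si hΦc hcw)
  rw [hk, map_mul, map_si hΦc hsi, map_pow, hvsi, mul_pow, ← map_pow, T_pow,
    mul_mul_mul_comm, ← map_mul, ← T_add]
  congr 2
  ring

end Loc

end Stmt12Aux

open Stmt12Aux

/-- a nontrivial `G_m`-coaction admits a local slice: there is a nonzero
semi-invariant `c ∈ R` (of some weight `t^w`), a degree `d > 0`, and an element `s` of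
the localization `R_c` (with the canonically extended coaction `Φc`) such that `s` is an
invertible semi-invariant of weight `t^{-d}` and every element of `R_c` of degree `< d`
is invariant. -/
theorem stmt12 {K R : Type*} [CommRing K] [CommRing R] [Algebra K R]
    (Φ : R →ₐ[K] LaurentPolynomial R) (hΦ : IsGmCoaction Φ.toRingHom)
    (hnontriv : ∃ a : R, Φ a ≠ LaurentPolynomial.C a) :
    ∃ c : R, c ≠ 0 ∧ (∃ w : ℤ, Φ c = LaurentPolynomial.C c * LaurentPolynomial.T w) ∧
      ∃ d : ℤ, 0 < d ∧
        ∀ Φc : Localization.Away c →+* LaurentPolynomial (Localization.Away c),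
          (∀ r : R, (Φc (algebraMap R (Localization.Away c) r)).coeff =
            Finsupp.mapRange (algebraMap R (Localization.Away c))
              (map_zero (algebraMap R (Localization.Away c))) (Φ r).coeff) →
          ∃ s : Localization.Away c,
            IsUnit s ∧
            Φc s = LaurentPolynomial.C s * LaurentPolynomial.T (-d) ∧
            ∀ a : Localization.Away c,
              (∀ k : ℤ, d ≤ |k| → (Φc a).coeff k = 0) → Φc a = LaurentPolynomial.C a := by
  classical
  obtain ⟨a0, ha0⟩ := hnontriv
  have hex : ∃ k : ℤ, k ≠ 0 ∧ (Φ a0).coeff k ≠ 0 := by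
    by_contra h
    push_neg at h
    apply ha0
    have h1 : Φ a0 = AddMonoidAlgebra.single 0 ((Φ a0).coeff 0) := by
      ext j
      rcases eq_or_ne j 0 with rfl | hj
      · simp
      · rw [h j hj, AddMonoidAlgebra.coeff_single, Finsupp.single_apply, if_neg (Ne.symm hj)]
    have h2 := hΦ.1 a0
    simp only [AlgHom.toRingHom_eq_coe, RingHom.coe_coe] at h2
    rw [h1, AddMonoidAlgebra.coeff_single, Finsupp.sum_single_index rfl] at h2
    rw [h1, h2, single_eq_C_mul_T, T_zero, mul_one]
  obtain ⟨k0, hk0, hc00⟩ := hex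
  have hP : ∃ d : ℕ, 0 < d ∧ ∃ c : R, c ≠ 0 ∧ (∃ w : ℤ, Φ c = C c * T w) ∧
      ((d : ℤ) ∈ Gsub Φ c) := by
    refine ⟨k0.natAbs, Int.natAbs_pos.mpr hk0, (Φ a0).coeff k0, hc00,
      ⟨k0, coassoc Φ hΦ a0 k0⟩, ?_⟩
    have hk0W : k0 ∈ Wset Φ ((Φ a0).coeff k0) :=
      ⟨(Φ a0).coeff k0, 1, 1, coassoc Φ hΦ a0 k0, by rw [mul_one, pow_one]⟩
    have hG := Gsub.of_Wset Φ hk0W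
    rcases Int.natAbs_eq k0 with h | h
    · rw [← h]; exact hG
    · have h' : ((k0.natAbs : ℤ)) = -k0 := by omega
      rw [h']; exact neg_mem hG
  set d0 := Nat.find hP with hd0
  have hspec := Nat.find_spec hP
  have hmin : ∀ m, m < d0 → ¬ (0 < m ∧ ∃ c : R, c ≠ 0 ∧ (∃ w : ℤ, Φ c = C c * T w) ∧
      ((m : ℤ) ∈ Gsub Φ c)) := fun m hm => Nat.find_min hP hm
  obtain ⟨hdpos, c, hcne, ⟨w, hcw⟩, hdG⟩ := hspec
  refine ⟨c, hcne, ⟨w, hcw⟩, (d0 : ℤ), by exact_mod_cast hdpos, ?_⟩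
  intro Φc hΦc
  have hu : IsUnit (algebraMap R (Localization.Away c) c) :=
    IsLocalization.map_units (M := Submonoid.powers c) (Localization.Away c)
      ⟨c, Submonoid.mem_powers c⟩
  obtain ⟨uc, huc⟩ := hu
  obtain ⟨v, hv⟩ : ∃ v : Localization.Away c,
      algebraMap R (Localization.Away c) c * v = 1 :=
    ⟨(uc⁻¹ : _), by rw [← huc]; exact uc.mul_inv⟩
  have hdG' := hdG
  obtain ⟨p, q, hpW, hqW, hpq⟩ := hdG
  obtain ⟨rp, sp, np, hrp, hep⟩ := hpW
  obtain ⟨rq, sq, nq, hrq, heq⟩ := hqW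
  have hrpu : algebraMap R (Localization.Away c) rp *
      (algebraMap R (Localization.Away c) sp * v ^ np) = 1 := by
    rw [← mul_assoc, ← map_mul, hep, map_pow, ← mul_pow, hv, one_pow]
  have hrqu : algebraMap R (Localization.Away c) rq *
      (algebraMap R (Localization.Away c) sq * v ^ nq) = 1 := by
    rw [← mul_assoc, ← map_mul, heq, map_pow, ← mul_pow, hv, one_pow]
  have hyp : Φc (algebraMap R (Localization.Away c) sp * v ^ np) =
      C (algebraMap R (Localization.Away c) sp * v ^ np) * T (-p) :=
    inv_si hrpu (map_si hΦc hrp)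
  refine ⟨algebraMap R (Localization.Away c) rq *
      (algebraMap R (Localization.Away c) sp * v ^ np), ?_, ?_, ?_⟩
  · exact (IsUnit.of_mul_eq_one _ hrqu).mul
      (IsUnit.of_mul_eq_one _ (by rw [mul_comm]; exact hrpu))
  · rw [map_mul, map_si hΦc hrq, hyp, mul_mul_mul_comm, ← map_mul, ← T_add]
    have hqp : q + -p = -(d0 : ℤ) := by omega
    rw [hqp]
  · intro a ha
    have hcomp0 : ∀ j : ℤ, j ≠ 0 → (Φc a).coeff j = 0 := by
      intro j hj
      rcases le_or_gt (d0 : ℤ) |j| with hbig | hsmall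
      · exact ha j hbig
      by_contra haj
      obtain ⟨r', e, hsi', hval⟩ := component hΦ hcw hΦc hv a j
      have hcr' : c * r' ≠ 0 := by
        intro h0
        apply haj
        have h1 : algebraMap R (Localization.Away c) c *
            algebraMap R (Localization.Away c) r' = 0 := by
          rw [← map_mul, h0, map_zero]
        have h2 : algebraMap R (Localization.Away c) r' = 0 := by
          calc algebraMap R (Localization.Away c) r'
              = (algebraMap R (Localization.Away c) c * v) *
                algebraMap R (Localization.Away c) r' := by rw [hv, one_mul]
            _ = v * (algebraMap R (Localization.Away c) c *
                algebraMap R (Localization.Away c) r') := by ring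
            _ = 0 := by rw [h1, mul_zero]
        rw [hval, h2, zero_mul]
      set g := Int.gcd (d0 : ℤ) j with hg
      have hgpos : 0 < g := Int.gcd_pos_of_ne_zero_left j (by exact_mod_cast hdpos.ne')
      have hgltd : g < d0 := by
        have h1 : (g : ℤ) ∣ |j| := (Int.gcd_dvd_right _ _).trans (self_dvd_abs j)
        have h2 : (g : ℤ) ≤ |j| := Int.le_of_dvd (abs_pos.mpr hj) h1
        have h3 : (g : ℤ) < (d0 : ℤ) := lt_of_le_of_lt h2 hsmall
        exact_mod_cast h3
      refine hmin g hgltd ⟨hgpos, c * r', hcr', ⟨w + (j + e * w), si_mul Φ hcw hsi'⟩, ?_⟩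
      have hdmem : ((d0 : ℤ)) ∈ Gsub Φ (c * r') := Gsub.mono Φ hdG'
      have hwW : w ∈ Wset Φ (c * r') := ⟨c, r', 1, hcw, by rw [pow_one]⟩
      have hr'W : (j + e * w) ∈ Wset Φ (c * r') := ⟨r', c, 1, hsi', by rw [pow_one]; ring⟩
      have hjmem : j ∈ Gsub Φ (c * r') :=
        ⟨j + e * w, (e : ℤ) * w, hr'W, Wset.nsmul_mem Φ hwW e, by ring⟩
      have hbez := Int.gcd_eq_gcd_ab (d0 : ℤ) j
      rw [← hg] at hbez
      rw [hbez]
      have hmem := add_mem (zsmul_mem hdmem (Int.gcdA (d0 : ℤ) j))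
        (zsmul_mem hjmem (Int.gcdB (d0 : ℤ) j))
      simpa only [zsmul_eq_mul, Int.cast_id, mul_comm] using hmem
    have hsingle : Φc a = AddMonoidAlgebra.single 0 ((Φc a).coeff 0) := by
      ext j
      rcases eq_or_ne j 0 with rfl | hj
      · simp
      · rw [hcomp0 j hj, AddMonoidAlgebra.coeff_single, Finsupp.single_apply, if_neg (Ne.symm hj)]
    have h2 := counit_loc hΦ hΦc a
    rw [hsingle, eps_single] at h2
    rw [hsingle, h2, single_eq_C_mul_T, T_zero, mul_one]
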